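/- arXiv:2003.00199 — 5 statements merged into one kernel-verified Lean document; each statement's English description precedes it below -/
import Mathlib

section
/- The set C(e, t) = { s ∈ ℝ_+^K : ∑_{k∈S} s_k ≤ B * t * log₂(1 + (∑_{k∈S} e_k h_k)/(t σ²)) for all nonempty subsets S of {1,…,K} } is a convex set in s, and jointly convex in (s, e, t) for t > 0 and e ∈ ℝ_+^K. -/
private lemma key_concave (σ2 : ℝ) (hσ2 : 0 < σ2) {x1 x2 t1 t2 a b : ℝ}
    (hx1 : 0 ≤ x1) (hx2 : 0 ≤ x2) (ht1 : 0 < t1) (ht2 : 0 < t2)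
    (ha : 0 ≤ a) (hb : 0 ≤ b) (hab : a + b = 1) :
    a * (t1 * Real.log (1 + x1 / (t1 * σ2))) + b * (t2 * Real.log (1 + x2 / (t2 * σ2)))
      ≤ (a * t1 + b * t2) *
        Real.log (1 + (a * x1 + b * x2) / ((a * t1 + b * t2) * σ2)) := by
  set t := a * t1 + b * t2 with htdef
  have ht : 0 < t := by
    rcases ha.eq_or_lt with h0 | h0
    · have hb1 : b = 1 := by linarith
      simp [htdef, ← h0, hb1, ht2]
    · have : 0 ≤ b * t2 := mul_nonneg hb ht2.le
      have := mul_pos h0 ht1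
      simp only [htdef]; linarith
  have hu1 : (0:ℝ) < 1 + x1 / (t1 * σ2) := by positivity
  have hu2 : (0:ℝ) < 1 + x2 / (t2 * σ2) := by positivity
  have hw1 : 0 ≤ a * t1 / t := by positivity
  have hw2 : 0 ≤ b * t2 / t := by positivity
  have hwsum : a * t1 / t + b * t2 / t = 1 := by
    field_simp
    exact htdef.symm
  have jensen := strictConcaveOn_log_Ioi.concaveOn.2 (Set.mem_Ioi.2 hu1)
    (Set.mem_Ioi.2 hu2) hw1 hw2 hwsum
  simp only [smul_eq_mul] at jensen
  have hsum' : a * t1 / t * (1 + x1 / (t1 * σ2)) + b * t2 / t * (1 + x2 / (t2 * σ2))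
      = 1 + (a * x1 + b * x2) / (t * σ2) := by
    field_simp
    ring
  rw [hsum'] at jensen
  calc a * (t1 * Real.log (1 + x1 / (t1 * σ2))) + b * (t2 * Real.log (1 + x2 / (t2 * σ2)))
      = t * (a * t1 / t * Real.log (1 + x1 / (t1 * σ2))
          + b * t2 / t * Real.log (1 + x2 / (t2 * σ2))) := by
        field_simp
    _ ≤ t * Real.log (1 + (a * x1 + b * x2) / (t * σ2)) :=
        mul_le_mul_of_nonneg_left jensen ht.le

/-- The region `C(e,t)` of uploadable bit vectors is convex in `s` for fixed `(e,t)`,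
and the corresponding set is jointly convex in `(s, e, t)` for `t > 0`, `e ≥ 0`. -/
theorem stmt_4 (K : ℕ) (B σ2 : ℝ) (hB : 0 < B) (hσ2 : 0 < σ2)
    (h : Fin K → ℝ) (hh : ∀ k, 0 < h k) :
    (∀ (e : Fin K → ℝ), (∀ k, 0 ≤ e k) → ∀ t : ℝ, 0 < t →
      Convex ℝ {s : Fin K → ℝ |
        (∀ k, 0 ≤ s k) ∧
        ∀ S : Finset (Fin K), S.Nonempty →
          ∑ k ∈ S, s k ≤ B * t * Real.logb 2 (1 + (∑ k ∈ S, e k * h k) / (t * σ2))}) ∧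
    Convex ℝ {q : (Fin K → ℝ) × (Fin K → ℝ) × ℝ |
      0 < q.2.2 ∧ (∀ k, 0 ≤ q.2.1 k) ∧ (∀ k, 0 ≤ q.1 k) ∧
      ∀ S : Finset (Fin K), S.Nonempty →
        ∑ k ∈ S, q.1 k ≤
          B * q.2.2 * Real.logb 2 (1 + (∑ k ∈ S, q.2.1 k * h k) / (q.2.2 * σ2))} := by
  constructor
  · -- convexity in s for fixed (e, t)
    intro e he t ht s1 hs1 s2 hs2 a b ha hb hab
    obtain ⟨hs1n, hs1c⟩ := hs1
    obtain ⟨hs2n, hs2c⟩ := hs2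
    refine ⟨fun k => ?_, fun S hS => ?_⟩
    · have : 0 ≤ a * s1 k + b * s2 k :=
        add_nonneg (mul_nonneg ha (hs1n k)) (mul_nonneg hb (hs2n k))
      simpa using this
    · have : ∑ k ∈ S, (a • s1 + b • s2) k = a * ∑ k ∈ S, s1 k + b * ∑ k ∈ S, s2 k := by
        simp [Finset.sum_add_distrib, Finset.mul_sum]
      rw [this]
      have h1 := hs1c S hS
      have h2 := hs2c S hS
      calc a * ∑ k ∈ S, s1 k + b * ∑ k ∈ S, s2 k
          ≤ a * (B * t * Real.logb 2 (1 + (∑ k ∈ S, e k * h k) / (t * σ2)))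
            + b * (B * t * Real.logb 2 (1 + (∑ k ∈ S, e k * h k) / (t * σ2))) :=
            add_le_add (mul_le_mul_of_nonneg_left h1 ha) (mul_le_mul_of_nonneg_left h2 hb)
        _ = B * t * Real.logb 2 (1 + (∑ k ∈ S, e k * h k) / (t * σ2)) := by
            rw [← add_mul, hab, one_mul]
  · -- joint convexity
    rintro ⟨s1, e1, t1⟩ ⟨ht1, he1, hs1, hc1⟩ ⟨s2, e2, t2⟩ ⟨ht2, he2, hs2, hc2⟩ a b ha hb hab
    simp only [Prod.smul_mk, Prod.mk_add_mk, smul_eq_mul, Set.mem_setOf_eq] at *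
    have ht : 0 < a * t1 + b * t2 := by
      rcases ha.eq_or_lt with h0 | h0
      · have hb1 : b = 1 := by linarith
        simp [← h0, hb1, ht2]
      · have : 0 ≤ b * t2 := mul_nonneg hb ht2.le
        have := mul_pos h0 ht1
        linarith
    refine ⟨ht, fun k => ?_, fun k => ?_, fun S hS => ?_⟩
    · exact add_nonneg (mul_nonneg ha (he1 k)) (mul_nonneg hb (he2 k))
    · exact add_nonneg (mul_nonneg ha (hs1 k)) (mul_nonneg hb (hs2 k))
    · have hX1 : 0 ≤ ∑ k ∈ S, e1 k * h k :=
        Finset.sum_nonneg fun k _ => mul_nonneg (he1 k) (hh k).le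
      have hX2 : 0 ≤ ∑ k ∈ S, e2 k * h k :=
        Finset.sum_nonneg fun k _ => mul_nonneg (he2 k) (hh k).le
      have hEsum : ∑ k ∈ S, (a • e1 + b • e2) k * h k
          = a * ∑ k ∈ S, e1 k * h k + b * ∑ k ∈ S, e2 k * h k := by
        simp only [Pi.add_apply, Pi.smul_apply, smul_eq_mul, add_mul,
          Finset.sum_add_distrib, Finset.mul_sum, mul_assoc]
      have hSsum : ∑ k ∈ S, (a • s1 + b • s2) k = a * ∑ k ∈ S, s1 k + b * ∑ k ∈ S, s2 k := by
        simp [Finset.sum_add_distrib, Finset.mul_sum]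
      rw [hSsum, hEsum]
      have key := key_concave σ2 hσ2 hX1 hX2 ht1 ht2 ha hb hab
      have hlog2 : 0 < Real.log 2 := Real.log_pos (by norm_num)
      have h1 := hc1 S hS
      have h2 := hc2 S hS
      have hB2 : 0 ≤ B / Real.log 2 := by positivity
      calc a * ∑ k ∈ S, s1 k + b * ∑ k ∈ S, s2 k
          ≤ a * (B * t1 * Real.logb 2 (1 + (∑ k ∈ S, e1 k * h k) / (t1 * σ2)))
            + b * (B * t2 * Real.logb 2 (1 + (∑ k ∈ S, e2 k * h k) / (t2 * σ2))) := by
            nlinarith [mul_le_mul_of_nonneg_left h1 ha, mul_le_mul_of_nonneg_left h2 hb]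
        _ = (B / Real.log 2) *
            (a * (t1 * Real.log (1 + (∑ k ∈ S, e1 k * h k) / (t1 * σ2)))
              + b * (t2 * Real.log (1 + (∑ k ∈ S, e2 k * h k) / (t2 * σ2)))) := by
            simp only [Real.logb]
            field_simp
        _ ≤ (B / Real.log 2) * ((a * t1 + b * t2) *
              Real.log (1 + (a * (∑ k ∈ S, e1 k * h k) + b * (∑ k ∈ S, e2 k * h k))
                / ((a * t1 + b * t2) * σ2))) :=
            mul_le_mul_of_nonneg_left key hB2
        _ = B * (a * t1 + b * t2) *
            Real.logb 2 (1 + (a * (∑ k ∈ S, e1 k * h k) + b * (∑ k ∈ S, e2 k * h k))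
              / ((a * t1 + b * t2) * σ2)) := by
            simp only [Real.logb]
            field_simp
end

section
/- The MMSE-SIC rate vector r^(π) (with r_{π(k)} = B log₂((σ² + ∑_{n≤k} p_{π(n)} h_{π(n)})/(σ² + ∑_{n<k} p_{π(n)} h_{π(n)}))) lies in the NOMA capacity region R_NOMA(p), i.e., satisfies ∑_{k∈S} r_k ≤ B log₂(1 + ∑_{k∈S} p_k h_k/σ²) for every subset S. -/
/-- The MMSE-SIC rate vector under decoding order `π` lies in the NOMA capacity
region: every subset sum-rate constraint holds. Here `q u` is the rate of user `u`,
i.e. `q (π k)` is the SIC rate `r_{π(k)}`. -/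
theorem stmt_7 (K : ℕ) (B σ2 : ℝ) (hB : 0 < B) (hσ2 : 0 < σ2)
    (p h : Fin K → ℝ) (hp : ∀ k, 0 ≤ p k) (hh : ∀ k, 0 < h k)
    (π : Equiv.Perm (Fin K))
    (A : ℕ → ℝ)
    (hA : ∀ m, A m = ∑ n ∈ Finset.univ.filter (fun n : Fin K => (n : ℕ) < m),
      p (π n) * h (π n))
    (q : Fin K → ℝ)
    (hq : ∀ k : Fin K, q (π k) = B * Real.logb 2 ((σ2 + A (k + 1)) / (σ2 + A k))) :
    ∀ S : Finset (Fin K),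
      ∑ k ∈ S, q k ≤ B * Real.logb 2 (1 + (∑ k ∈ S, p k * h k) / σ2) := by
  intro S
  set c : Fin K → ℝ := fun j => p (π j) * h (π j) with hc
  have hc0 : ∀ j, 0 ≤ c j := fun j => mul_nonneg (hp _) (le_of_lt (hh _))
  have hA0 : ∀ m, 0 ≤ A m := by
    intro m; rw [hA m]; exact Finset.sum_nonneg fun n _ => hc0 n
  have hApos : ∀ m, 0 < σ2 + A m := fun m => by linarith [hA0 m]
  -- A (j+1) = A j + c j
  have hAstep : ∀ j : Fin K, A ((j : ℕ) + 1) = A j + c j := by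
    intro j
    rw [hA, hA]
    have hfil : Finset.univ.filter (fun n : Fin K => (n : ℕ) < (j : ℕ) + 1)
        = insert j (Finset.univ.filter (fun n : Fin K => (n : ℕ) < (j : ℕ))) := by
      ext n
      simp only [Finset.mem_filter, Finset.mem_univ, true_and, Finset.mem_insert,
        Fin.ext_iff]
      omega
    rw [hfil, Finset.sum_insert (by simp)]
    ring
  -- key product inequality
  have key : ∀ T : Finset (Fin K),
      ∏ j ∈ T, ((σ2 + A ((j : ℕ) + 1)) / (σ2 + A j)) ≤ (σ2 + ∑ j ∈ T, c j) / σ2 := by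
    intro T
    induction T using Finset.induction_on_max with
    | empty => simp [div_self hσ2.ne']
    | insert m T hlt ih =>
      rw [Finset.prod_insert (fun hm => lt_irrefl m (hlt m hm)),
        Finset.sum_insert (fun hm => lt_irrefl m (hlt m hm))]
      have hsub : ∑ j ∈ T, c j ≤ A m := by
        rw [hA]
        apply Finset.sum_le_sum_of_subset_of_nonneg
        · intro x hx
          simp only [Finset.mem_filter, Finset.mem_univ, true_and]
          exact_mod_cast hlt x hx
        · exact fun i _ _ => hc0 i
      have hsT : 0 ≤ ∑ j ∈ T, c j := Finset.sum_nonneg fun j _ => hc0 j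
      have hratio : (σ2 + A ((m : ℕ) + 1)) / (σ2 + A m)
          ≤ (σ2 + ∑ j ∈ T, c j + c m) / (σ2 + ∑ j ∈ T, c j) := by
        rw [hAstep m, div_le_div_iff₀ (hApos m) (by linarith)]
        nlinarith [hc0 m, hApos m]
      calc (σ2 + A ((m : ℕ) + 1)) / (σ2 + A m) * ∏ j ∈ T, ((σ2 + A ((j : ℕ) + 1)) / (σ2 + A j))
          ≤ ((σ2 + ∑ j ∈ T, c j + c m) / (σ2 + ∑ j ∈ T, c j)) * ((σ2 + ∑ j ∈ T, c j) / σ2) := by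
            apply mul_le_mul hratio ih
            · exact Finset.prod_nonneg fun j _ => le_of_lt (div_pos (hApos _) (hApos _))
            · exact div_nonneg (by linarith [hc0 m]) (by linarith)
        _ = (σ2 + (c m + ∑ j ∈ T, c j)) / σ2 := by
            field_simp
            ring
  -- transport the sum over S via π
  set T : Finset (Fin K) := S.map π.symm.toEmbedding with hT
  have hmap : T.map π.toEmbedding = S := by
    rw [hT, Finset.map_map]
    convert Finset.map_refl (s := S) using 2
    ext x
    simp
  have hsumq : ∑ k ∈ S, q k = ∑ j ∈ T, q (π j) := by
    rw [← hmap, Finset.sum_map]; rfl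
  have hsumc : ∑ k ∈ S, p k * h k = ∑ j ∈ T, c j := by
    rw [← hmap, Finset.sum_map]; rfl
  rw [hsumq, hsumc]
  have hlog : ∑ j ∈ T, q (π j)
      = B * Real.logb 2 (∏ j ∈ T, ((σ2 + A ((j : ℕ) + 1)) / (σ2 + A j))) := by
    rw [Real.logb_prod _ _ (fun j _ => ne_of_gt (div_pos (hApos _) (hApos _))),
      Finset.mul_sum]
    exact Finset.sum_congr rfl fun j _ => hq j
  rw [hlog]
  have harg : (1 : ℝ) + (∑ j ∈ T, c j) / σ2 = (σ2 + ∑ j ∈ T, c j) / σ2 := by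
    field_simp
  rw [harg]
  apply mul_le_mul_of_nonneg_left _ (le_of_lt hB)
  exact Real.logb_le_logb_of_le (by norm_num)
    (Finset.prod_pos fun j _ => div_pos (hApos _) (hApos _)) (key T)
end

section
/- Given S, B, σ², h > 0 and ζ > 0, the equation 2^{S/(Bt)} (σ²/h)(1 − (S ln 2)/(B t)) − σ²/h + ζ = 0 has at most one solution t > 0, and the minimizer of φ(t) = (2^{S/(Bt)} − 1) t σ²/h + ζ t over t ≥ t_min (where t_min = S/(B log₂(1 + P_max h/σ²)) for P_max > 0) is max(τ*, t_min) where τ* solves the equation (when a solution exists). -/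
/-- The stationarity equation `2^{S/(Bt)} (σ²/h)(1 − S ln2/(Bt)) − σ²/h + ζ = 0`
has at most one positive solution, and if `τ*` is such a solution then the minimizer
of `φ(t) = (2^{S/(Bt)} − 1) t σ²/h + ζ t` over `t ≥ t_min` is `max(τ*, t_min)`,
where `t_min = S/(B log₂(1 + P_max h/σ²))`. -/
theorem stmt_12 (S B σ2 h ζ Pmax : ℝ) (hS : 0 < S) (hB : 0 < B) (hσ2 : 0 < σ2)
    (hh : 0 < h) (hζ : 0 < ζ) (hP : 0 < Pmax)
    (φ : ℝ → ℝ)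
    (hφ : ∀ t, φ t = ((2 : ℝ) ^ (S / (B * t)) - 1) * t * σ2 / h + ζ * t)
    (eqn : ℝ → Prop)
    (heqn : ∀ t, eqn t ↔
      (2 : ℝ) ^ (S / (B * t)) * (σ2 / h) * (1 - S * Real.log 2 / (B * t))
        - σ2 / h + ζ = 0)
    (tmin : ℝ) (htmin : tmin = S / (B * Real.logb 2 (1 + Pmax * h / σ2))) :
    (∀ t1 t2 : ℝ, 0 < t1 → 0 < t2 → eqn t1 → eqn t2 → t1 = t2) ∧
    ∀ τ : ℝ, 0 < τ → eqn τ → ∀ t : ℝ, tmin ≤ t → φ (max τ tmin) ≤ φ t := by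
  have hσh : 0 < σ2 / h := div_pos hσ2 hh
  set g : ℝ → ℝ := fun t => (2 : ℝ) ^ (S / (B * t)) * (σ2 / h) * (1 - S * Real.log 2 / (B * t))
        - σ2 / h + ζ with hg
  set ψ : ℝ → ℝ := fun u => (2 : ℝ) ^ u * (1 - u * Real.log 2) with hψ
  -- derivative of ψ
  have hψd : ∀ u : ℝ, HasDerivAt ψ (-((2:ℝ) ^ u * (Real.log 2)^2 * u)) u := by
    intro u
    have h1 : HasDerivAt (fun u : ℝ => (2:ℝ) ^ u) ((2:ℝ) ^ u * Real.log 2) u :=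
      (Real.hasStrictDerivAt_const_rpow (by norm_num) u).hasDerivAt
    have h2 : HasDerivAt (fun u : ℝ => 1 - u * Real.log 2) (-Real.log 2) u := by
      simpa using (hasDerivAt_const u (1:ℝ)).fun_sub ((hasDerivAt_id u).mul_const (Real.log 2))
    have := h1.fun_mul h2
    refine this.congr_deriv ?_
    ring
  have hψanti : StrictAntiOn ψ (Set.Ici 0) := by
    apply strictAntiOn_of_deriv_neg (convex_Ici 0)
    · exact fun u _ => (hψd u).continuousAt.continuousWithinAt
    · intro u hu
      rw [interior_Ici] at hu
      rw [(hψd u).deriv]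
      have h2 : (0:ℝ) < (2:ℝ) ^ u := Real.rpow_pos_of_pos (by norm_num) u
      have hl : (0:ℝ) < Real.log 2 := Real.log_pos (by norm_num)
      nlinarith [mul_pos (mul_pos h2 (mul_pos hl hl)) hu]
  have hgψ : ∀ t : ℝ, 0 < t → g t = (σ2 / h) * ψ (S / (B * t)) + (ζ - σ2 / h) := by
    intro t ht
    simp only [hg, hψ]
    have : S * Real.log 2 / (B * t) = (S / (B * t)) * Real.log 2 := by ring
    rw [this]; ring
  have hupos : ∀ t : ℝ, 0 < t → 0 < S / (B * t) := fun t ht => div_pos hS (mul_pos hB ht)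
  have hgmono : StrictMonoOn g (Set.Ioi (0:ℝ)) := by
    intro t1 ht1 t2 ht2 h12
    rw [hgψ t1 ht1, hgψ t2 ht2]
    have hu2 : S / (B * t2) < S / (B * t1) :=
      div_lt_div_of_pos_left hS (mul_pos hB ht1) (by exact mul_lt_mul_of_pos_left h12 hB)
    have := hψanti (le_of_lt (hupos t2 ht2)) (le_of_lt (hupos t1 ht1)) hu2
    nlinarith
  -- derivative of φ
  have hφd : ∀ t : ℝ, 0 < t → HasDerivAt φ (g t) t := by
    intro t ht
    have hBt : B * t ≠ 0 := (mul_pos hB ht).ne'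
    have hu : HasDerivAt (fun t : ℝ => S / (B * t)) (-(S * B) / (B * t) ^ 2) t := by
      have h1 : HasDerivAt (fun t : ℝ => B * t) B t := by
        simpa using (hasDerivAt_id t).const_mul B
      have h2 : HasDerivAt (fun t : ℝ => S * (B * t)⁻¹) (S * (-B / (B * t) ^ 2)) t :=
        (h1.inv hBt).const_mul S
      have h3 : HasDerivAt (fun t : ℝ => S / (B * t)) (S * (-B / (B * t) ^ 2)) t := by
        simpa only [div_eq_mul_inv] using h2
      convert h3 using 1; ring
    have hA : HasDerivAt (fun t : ℝ => (2:ℝ) ^ (S / (B * t)))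
        ((2:ℝ) ^ (S / (B * t)) * Real.log 2 * (-(S * B) / (B * t) ^ 2)) t :=
      (Real.hasStrictDerivAt_const_rpow (by norm_num) _).hasDerivAt.comp t hu
    have hmain : HasDerivAt (fun t : ℝ => ((2:ℝ) ^ (S / (B * t)) - 1) * t * σ2 / h + ζ * t)
        (g t) t := by
      have h3 : HasDerivAt (fun t : ℝ => ((2:ℝ) ^ (S / (B * t)) - 1) * t)
          (((2:ℝ) ^ (S / (B * t)) * Real.log 2 * (-(S * B) / (B * t) ^ 2)) * t
            + ((2:ℝ) ^ (S / (B * t)) - 1)) t := by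
        simpa using (hA.sub_const 1).fun_mul (hasDerivAt_id t)
      have h4 := ((h3.mul_const σ2).div_const h).fun_add ((hasDerivAt_id t).const_mul ζ)
      refine h4.congr_deriv ?_
      rw [hg]
      field_simp
      ring
    exact hmain.congr_of_eventuallyEq (by filter_upwards with x; rw [hφ x])
  have htminpos : 0 < tmin := by
    rw [htmin]
    apply div_pos hS
    apply mul_pos hB
    apply Real.logb_pos (by norm_num)
    have : 0 < Pmax * h / σ2 := div_pos (mul_pos hP hh) hσ2
    linarith
  constructor
  · intro t1 t2 ht1 ht2 he1 he2
    exact hgmono.injOn ht1 ht2 (((heqn t1).mp he1).trans (((heqn t2).mp he2)).symm)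
  · intro τ hτ heτ t ht
    have hgτ : g τ = 0 := (heqn τ).mp heτ
    have htpos : 0 < t := lt_of_lt_of_le htminpos ht
    have hmono : MonotoneOn φ (Set.Ici τ) := by
      apply monotoneOn_of_deriv_nonneg (convex_Ici τ)
      · exact fun x hx => (hφd x (lt_of_lt_of_le hτ hx)).continuousAt.continuousWithinAt
      · intro x hx
        rw [interior_Ici] at hx
        exact (hφd x (hτ.trans hx)).differentiableAt.differentiableWithinAt
      · intro x hx
        rw [interior_Ici] at hx
        have hxpos : 0 < x := hτ.trans hx
        rw [(hφd x hxpos).deriv]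
        have := hgmono (Set.mem_Ioi.mpr hτ) (Set.mem_Ioi.mpr hxpos) hx
        linarith [hgτ ▸ this]
    have hanti : AntitoneOn φ (Set.Ioc 0 τ) := by
      apply antitoneOn_of_deriv_nonpos (convex_Ioc 0 τ)
      · exact fun x hx => (hφd x hx.1).continuousAt.continuousWithinAt
      · intro x hx
        rw [interior_Ioc] at hx
        exact (hφd x hx.1).differentiableAt.differentiableWithinAt
      · intro x hx
        rw [interior_Ioc] at hx
        rw [(hφd x hx.1).deriv]
        have := hgmono (Set.mem_Ioi.mpr hx.1) (Set.mem_Ioi.mpr hτ) hx.2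
        linarith [hgτ ▸ this]
    rcases le_total τ tmin with hc | hc
    · rw [max_eq_right hc]
      exact hmono (Set.mem_Ici.mpr hc) (Set.mem_Ici.mpr (hc.trans ht)) ht
    · rw [max_eq_left hc]
      rcases le_total τ t with h2 | h2
      · exact hmono (Set.mem_Ici.mpr le_rfl) (Set.mem_Ici.mpr h2) h2
      · exact hanti (Set.mem_Ioc.mpr ⟨htpos, h2⟩) (Set.mem_Ioc.mpr ⟨hτ, le_rfl⟩) h2
end

section
/- Any feasible solution of the TDMA energy minimization problem (P2) yields a feasible solution of the NOMA problem (P1) with equal objective value; hence the optimal NOMA energy is at most the optimal TDMA energy, and NOMA's minimum training delay T_min^NOMA ≤ T_min^TDMA. -/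
open Finset in
lemma jensen_log {ι : Type*} [DecidableEq ι] (t : Finset ι) (w x : ι → ℝ)
    (hw : ∀ i ∈ t, 0 ≤ w i) (hx : ∀ i ∈ t, 0 ≤ x i) (hW : ∑ i ∈ t, w i ≤ 1) :
    ∑ i ∈ t, w i * Real.log (1 + x i) ≤ Real.log (1 + ∑ i ∈ t, w i * x i) := by
  classical
  set W := ∑ i ∈ t, w i with hWdef
  have hnone : (none : Option ι) ∉ t.image some := by simp
  have hinj : Set.InjOn some (t : Set ι) := fun a _ b _ h => Option.some_injective _ h
  have key := (StrictConcaveOn.concaveOn strictConcaveOn_log_Ioi).le_map_sum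
    (t := insert (none : Option ι) (t.image some))
    (w := fun o => Option.elim o (1 - W) w) (p := fun o => Option.elim o 1 (fun i => 1 + x i))
    ?_ ?_ ?_
  · have e1 : ∑ o ∈ insert (none : Option ι) (t.image some),
        (Option.elim o (1 - W) w) • Real.log (Option.elim o 1 (fun i => 1 + x i))
        = ∑ i ∈ t, w i * Real.log (1 + x i) := by
      rw [Finset.sum_insert hnone, Finset.sum_image (fun a ha b hb h => Option.some_injective _ h)]
      simp
    have e2 : ∑ o ∈ insert (none : Option ι) (t.image some),
        (Option.elim o (1 - W) w) • Option.elim o 1 (fun i => 1 + x i)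
        = 1 + ∑ i ∈ t, w i * x i := by
      rw [Finset.sum_insert hnone, Finset.sum_image (fun a ha b hb h => Option.some_injective _ h)]
      simp only [Option.elim, smul_eq_mul, mul_one, mul_add]
      rw [Finset.sum_add_distrib]
      ring_nf
      linarith [hWdef]
    rw [e1, e2] at key
    exact key
  · rintro (_|i) hi
    · simpa using sub_nonneg.2 hW
    · simp only [Finset.mem_insert, Finset.mem_image] at hi
      rcases hi with h | ⟨a, ha, hab⟩
      · exact absurd h (by simp)
      · cases hab; exact hw _ ha
  · rw [Finset.sum_insert hnone, Finset.sum_image (fun a ha b hb h => Option.some_injective _ h)]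
    simp
    linarith [hWdef]
  · rintro (_|i) hi
    · simp
    · simp only [Finset.mem_insert, Finset.mem_image] at hi
      rcases hi with h | ⟨a, ha, hab⟩
      · exact absurd h (by simp)
      · cases hab
        simp only [Option.elim]
        have := hx i (by exact ha)
        exact Set.mem_Ioi.2 (by linarith)

lemma jensen_logb {ι : Type*} [DecidableEq ι] (t : Finset ι) (w x : ι → ℝ)
    (hw : ∀ i ∈ t, 0 ≤ w i) (hx : ∀ i ∈ t, 0 ≤ x i) (hW : ∑ i ∈ t, w i ≤ 1) :
    ∑ i ∈ t, w i * Real.logb 2 (1 + x i) ≤ Real.logb 2 (1 + ∑ i ∈ t, w i * x i) := by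
  have h := jensen_log t w x hw hx hW
  have h2 : (0:ℝ) < Real.log 2 := Real.log_pos one_lt_two
  simp only [Real.logb]
  calc ∑ i ∈ t, w i * (Real.log (1 + x i) / Real.log 2)
      = (∑ i ∈ t, w i * Real.log (1 + x i)) / Real.log 2 := by
        rw [Finset.sum_div]
        exact Finset.sum_congr rfl fun i _ => (mul_div_assoc _ _ _).symm
    _ ≤ Real.log (1 + ∑ i ∈ t, w i * x i) / Real.log 2 := by
        exact div_le_div_of_nonneg_right h h2.le |>.trans_eq rfl

/-- Every objective value achievable by a feasible solution of the TDMA energy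
minimization problem (P2) is also achievable in the NOMA problem (P1); hence (P1)'s
optimal energy is at most (P2)'s, and NOMA's minimum training delay is at most
TDMA's (feasibility of (P2) for a deadline `T` implies feasibility of (P1)). -/
theorem stmt_15 (K M N : ℕ) (hK : 0 < K) (hM : 0 < M) (hN : 0 < N)
    (Fk C fmax h ς : Fin K → ℝ)
    (hFk : ∀ k, 0 < Fk k) (hC : ∀ k, 0 < C k) (hfmax : ∀ k, 0 < fmax k)
    (hh : ∀ k, 0 < h k) (hς : ∀ k, 0 < ς k)
    (S B σ2 Pmax : ℝ) (hS : 0 < S) (hB : 0 < B) (hσ2 : 0 < σ2) (hP : 0 < Pmax)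
    (ValP2 ValP1 : ℝ → Set ℝ)
    (hV2 : ∀ T : ℝ, ValP2 T = {E : ℝ | ∃ (f p tup : Fin K → ℝ) (tloc : ℝ),
      (∀ k, 0 < f k ∧ f k ≤ fmax k) ∧
      (∀ k, 0 ≤ p k ∧ p k ≤ Pmax) ∧
      (∀ k, 0 ≤ tup k) ∧
      (∀ k, Fk k / (C k * f k) ≤ tloc) ∧
      (∀ k, S ≤ B * Real.logb 2 (1 + p k * h k / σ2) * tup k) ∧
      (M : ℝ) * ((N : ℝ) * tloc + ∑ k, tup k) ≤ T ∧
      E = (M : ℝ) * ∑ k, ((N : ℝ) * (Fk k / C k) * ς k * (f k) ^ 2 + p k * tup k)})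
    (hV1 : ∀ T : ℝ, ValP1 T = {E : ℝ | ∃ (f p r : Fin K → ℝ) (tloc tup : ℝ),
      (∀ k, 0 < f k ∧ f k ≤ fmax k) ∧
      (∀ k, 0 ≤ p k ∧ p k ≤ Pmax) ∧
      0 ≤ tup ∧
      (∀ k, 0 ≤ r k) ∧
      (∀ Sset : Finset (Fin K),
        ∑ k ∈ Sset, r k ≤ B * Real.logb 2 (1 + (∑ k ∈ Sset, p k * h k) / σ2)) ∧
      (∀ k, S ≤ r k * tup) ∧
      (∀ k, Fk k / (C k * f k) ≤ tloc) ∧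
      (M : ℝ) * ((N : ℝ) * tloc + tup) ≤ T ∧
      E = (M : ℝ) * ∑ k, ((N : ℝ) * (Fk k / C k) * ς k * (f k) ^ 2 + p k * tup)}) :
    (∀ T : ℝ, ValP2 T ⊆ ValP1 T) ∧
    (∀ T : ℝ, (ValP2 T).Nonempty → (ValP1 T).Nonempty) ∧
    (∀ T : ℝ, (ValP2 T).Nonempty → sInf (ValP1 T) ≤ sInf (ValP2 T)) := by

  have hsub : ∀ T : ℝ, ValP2 T ⊆ ValP1 T := by
    intro T E hE
    rw [hV2] at hE
    rw [hV1]
    obtain ⟨f, p, tup, tloc, h1, h2, h3, h4, h5, h6, h7⟩ := hE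
    set W := ∑ k, tup k with hWdef
    have hWnn : 0 ≤ W := Finset.sum_nonneg fun k _ => h3 k
    have htupW : ∀ k, tup k ≤ W :=
      fun k => Finset.single_le_sum (fun j _ => h3 j) (Finset.mem_univ k)
    have hWpos : 0 < W := by
      rcases hWnn.lt_or_eq with hlt | heq
      · exact hlt
      · exfalso
        have hk0 : ∀ k ∈ Finset.univ, tup k = 0 :=
          (Finset.sum_eq_zero_iff_of_nonneg (fun k _ => h3 k)).mp heq.symm
        have := h5 ⟨0, hK⟩
        rw [hk0 ⟨0, hK⟩ (Finset.mem_univ _), mul_zero] at this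
        linarith
    have hL : ∀ k, 0 ≤ Real.logb 2 (1 + p k * h k / σ2) := by
      intro k
      have : 0 ≤ p k * h k / σ2 := div_nonneg (mul_nonneg (h2 k).1 (hh k).le) hσ2.le
      exact Real.logb_nonneg one_lt_two (by linarith)
    refine ⟨f, fun k => p k * tup k / W, fun _ => S / W, tloc, W, h1, ?_, hWnn,
      fun k => (div_pos hS hWpos).le, ?_, ?_, h4, by simpa using h6, ?_⟩
    · intro k
      constructor
      · exact div_nonneg (mul_nonneg (h2 k).1 (h3 k)) hWnn
      · have : p k * tup k ≤ p k * W := mul_le_mul_of_nonneg_left (htupW k) (h2 k).1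
        have h' : p k * tup k / W ≤ p k * W / W := div_le_div_of_nonneg_right this hWpos.le
        rw [mul_div_cancel_right₀ _ hWpos.ne'] at h'
        exact h'.trans (h2 k).2
    · -- capacity region constraint
      intro Sset
      have hwx : ∀ k ∈ Sset, (0:ℝ) ≤ tup k / W := fun k _ => div_nonneg (h3 k) hWnn
      have hxx : ∀ k ∈ Sset, (0:ℝ) ≤ p k * h k / σ2 :=
        fun k _ => div_nonneg (mul_nonneg (h2 k).1 (hh k).le) hσ2.le
      have hWs : ∑ k ∈ Sset, tup k / W ≤ 1 := by
        rw [← Finset.sum_div]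
        rw [div_le_one hWpos]
        exact Finset.sum_le_sum_of_subset_of_nonneg (Finset.subset_univ _)
          (fun k _ _ => h3 k)
      have hjen := jensen_logb Sset (fun k => tup k / W) (fun k => p k * h k / σ2)
        hwx hxx hWs
      have hstep : ∀ k ∈ Sset, S / W ≤ B * (tup k / W * Real.logb 2 (1 + p k * h k / σ2)) := by
        intro k _
        have := div_le_div_of_nonneg_right (h5 k) hWpos.le
        calc S / W ≤ B * Real.logb 2 (1 + p k * h k / σ2) * tup k / W := this
          _ = B * (tup k / W * Real.logb 2 (1 + p k * h k / σ2)) := by ring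
      calc ∑ k ∈ Sset, S / W
          ≤ ∑ k ∈ Sset, B * (tup k / W * Real.logb 2 (1 + p k * h k / σ2)) :=
            Finset.sum_le_sum hstep
        _ = B * ∑ k ∈ Sset, tup k / W * Real.logb 2 (1 + p k * h k / σ2) := by
            rw [Finset.mul_sum]
        _ ≤ B * Real.logb 2 (1 + ∑ k ∈ Sset, tup k / W * (p k * h k / σ2)) :=
            mul_le_mul_of_nonneg_left hjen hB.le
        _ = B * Real.logb 2 (1 + (∑ k ∈ Sset, p k * tup k / W * h k) / σ2) := by
            have heq : ∑ k ∈ Sset, tup k / W * (p k * h k / σ2)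
                = (∑ k ∈ Sset, p k * tup k / W * h k) / σ2 := by
              rw [Finset.sum_div]
              refine Finset.sum_congr rfl fun k _ => ?_
              field_simp
            rw [heq]
    · intro k
      rw [div_mul_cancel₀ _ hWpos.ne']
    · rw [h7]
      congr 1
      refine Finset.sum_congr rfl fun k _ => ?_
      rw [div_mul_cancel₀ _ hWpos.ne']
  have hbdd : ∀ T : ℝ, BddBelow (ValP1 T) := by
    intro T
    refine ⟨0, fun E hE => ?_⟩
    rw [hV1] at hE
    obtain ⟨f, p, r, tloc, tup, h1, h2, h3, h4, h5, h6, h7, h8, h9⟩ := hE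
    rw [h9]
    apply mul_nonneg (Nat.cast_nonneg M)
    apply Finset.sum_nonneg
    intro k _
    have t1 : 0 ≤ (N : ℝ) * (Fk k / C k) * ς k * (f k) ^ 2 := by
      apply mul_nonneg
      apply mul_nonneg
      apply mul_nonneg (Nat.cast_nonneg N)
      · exact (div_pos (hFk k) (hC k)).le
      · exact (hς k).le
      · positivity
    have t2 : 0 ≤ p k * tup := mul_nonneg (h2 k).1 h3
    linarith
  refine ⟨hsub, fun T hne => hne.mono (hsub T), fun T hne => ?_⟩
  exact csInf_le_csInf (hbdd T) hne (hsub T)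
end

section
/- For the KKT system of minimizing c1 f² + c2/f over 0 ≤ f ≤ fmax with c1, c2, fmax > 0: any (f*, τ̲*, τ̄*) satisfying f* ∈ (0, fmax], τ̲*, τ̄* ≥ 0, complementary slackness τ̲* f* = 0 and τ̄*(f* − fmax) = 0, and stationarity 2 c1 f* − c2/(f*)² − τ̲* + τ̄* = 0, must have f* = min((c2/(2c1))^{1/3}, fmax). -/
/-- KKT characterization: any KKT point of `min c1 f² + c2/f` over `0 ≤ f ≤ fmax`
satisfies `f* = min((c2/(2c1))^{1/3}, fmax)`. -/
theorem stmt_16 (c1 c2 fmax : ℝ) (hc1 : 0 < c1) (hc2 : 0 < c2) (hfmax : 0 < fmax)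
    (fstar τlo τhi : ℝ)
    (hf : fstar ∈ Set.Ioc (0 : ℝ) fmax)
    (hτlo : 0 ≤ τlo) (hτhi : 0 ≤ τhi)
    (hcs1 : τlo * fstar = 0) (hcs2 : τhi * (fstar - fmax) = 0)
    (hstat : 2 * c1 * fstar - c2 / fstar ^ 2 - τlo + τhi = 0) :
    fstar = min ((c2 / (2 * c1)) ^ ((1 : ℝ) / 3)) fmax := by
  obtain ⟨hf0, hfle⟩ := hf
  set r : ℝ := (c2 / (2 * c1)) ^ ((1 : ℝ) / 3) with hr
  have hq : 0 < c2 / (2 * c1) := div_pos hc2 (by linarith)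
  have hr3 : r ^ 3 = c2 / (2 * c1) := by
    rw [hr, ← Real.rpow_natCast (_ ^ ((1:ℝ)/3)) 3, ← Real.rpow_mul hq.le]
    norm_num
  have hrpos : 0 < r := Real.rpow_pos_of_pos hq _
  have hτlo0 : τlo = 0 := by
    rcases mul_eq_zero.mp hcs1 with h | h
    · exact h
    · exact absurd h hf0.ne'
  subst hτlo0
  have hf2 : (0:ℝ) < fstar ^ 2 := by positivity
  -- τhi = c2 / f² − 2 c1 f
  have hτ : τhi = c2 / fstar ^ 2 - 2 * c1 * fstar := by linarith
  rcases mul_eq_zero.mp hcs2 with h0 | hfm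
  · -- τhi = 0 : f³ = c2/(2c1)
    have hcube : fstar ^ 3 = c2 / (2 * c1) := by
      have : 2 * c1 * fstar = c2 / fstar ^ 2 := by linarith [hτ, h0]
      field_simp at this ⊢
      nlinarith [this]
    have hfr : fstar = r := by
      have h3 : fstar ^ 3 = r ^ 3 := by rw [hcube, hr3]
      exact le_antisymm ((pow_le_pow_iff_left₀ hf0.le hrpos.le (by norm_num)).mp h3.le)
        ((pow_le_pow_iff_left₀ hrpos.le hf0.le (by norm_num)).mp h3.ge)
    rw [hfr, min_eq_left (hfr ▸ hfle)]
  · -- f = fmax, and fmax ≤ r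
    have hffm : fstar = fmax := by linarith [sub_eq_zero.mp hfm]
    have hτpos : 0 ≤ c2 / fstar ^ 2 - 2 * c1 * fstar := hτ ▸ hτhi
    have hcube : fstar ^ 3 ≤ c2 / (2 * c1) := by
      rw [div_sub' hf2.ne', le_div_iff₀ hf2] at hτpos
      rw [le_div_iff₀ (by linarith : (0:ℝ) < 2 * c1)]
      nlinarith [hτpos]
    have hler : fstar ≤ r := by
      have h3 : fstar ^ 3 ≤ r ^ 3 := by rw [hr3]; exact hcube
      exact (pow_le_pow_iff_left₀ hf0.le hrpos.le (by norm_num)).mp h3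
    rw [hffm, min_eq_right (hffm ▸ hler)]
end
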